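/- For all integers n ≥ 0 and m ≥ 0, det( ( binom(i+m, j)·binom(i+m+j, j) / binom(2i+2m, i+m) )_{i,j=0}^{n-1} ) · det( ( 1/(i+j+1) )_{i,j=0}^{m-1} ) = det( ( 1/(n+i+j+1) )_{i,j=0}^{m-1} ), where all determinants are over ℚ. -/

import Mathlib

open Finset Matrix Polynomial

lemma det_eq_of_forall_col_eq_smul_add_const' {n : Type*} [DecidableEq n] [Fintype n]
    {A B : Matrix n n ℚ} (c : n → ℚ) (k : n) (hk : c k = 0)
    (A_eq : ∀ i j, A i j = B i j + c j * B i k) : A.det = B.det := by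
  rw [← Matrix.det_transpose A, ← Matrix.det_transpose B]
  exact Matrix.det_eq_of_forall_row_eq_smul_add_const c k hk fun i j => A_eq j i

lemma cauchy_det (m : ℕ) (x y : ℕ → ℚ) (h : ∀ i < m, ∀ j < m, x i + y j ≠ 0) :
    (Matrix.of fun i j : Fin m => 1 / (x (i : ℕ) + y (j : ℕ))).det
      = (∏ i ∈ Finset.range m, ∏ j ∈ Finset.range i, ((x i - x j) * (y i - y j)))
        / ∏ i ∈ Finset.range m, ∏ j ∈ Finset.range m, (x i + y j) := by
  induction m generalizing x y with
  | zero => simp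
  | succ m ih =>
    have hxy : ∀ i < m + 1, ∀ j < m + 1, x i + y j ≠ 0 := h
    have h0 : ∀ j < m + 1, x 0 + y j ≠ 0 := fun j hj => hxy 0 (Nat.succ_pos m) j hj
    -- the three intermediate matrices
    set C2 : Matrix (Fin (m+1)) (Fin (m+1)) ℚ :=
      Matrix.of (fun i j : Fin (m+1) =>
        (1 / (x 0 + y (j : ℕ))) *
          (if i = 0 then 1 else (x 0 - x (i : ℕ)) * (1 / (x (i : ℕ) + y (j : ℕ))))) with hC2
    set C3 : Matrix (Fin (m+1)) (Fin (m+1)) ℚ :=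
      Matrix.of (fun i j : Fin (m+1) =>
        if i = 0 then 1 else (x 0 - x (i : ℕ)) * (1 / (x (i : ℕ) + y (j : ℕ)))) with hC3
    set C4 : Matrix (Fin (m+1)) (Fin (m+1)) ℚ :=
      Matrix.of (fun i j : Fin (m+1) =>
        if i = 0 then (if j = 0 then 1 else 0)
        else (if j = 0 then (x 0 - x (i : ℕ)) * (1 / (x (i : ℕ) + y 0))
          else (x 0 - x (i : ℕ)) * (1 / (x (i : ℕ) + y (j : ℕ)) - 1 / (x (i : ℕ) + y 0)))) with hC4
    have step1 : (Matrix.of fun i j : Fin (m+1) => 1 / (x (i : ℕ) + y (j : ℕ))).det = C2.det := by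
      apply Matrix.det_eq_of_forall_row_eq_smul_add_const
        (fun i : Fin (m+1) => if i = 0 then 0 else 1) 0 (by simp)
      intro i j
      by_cases hi : i = 0
      · simp [hi, hC2]
      · have h1 : x (i : ℕ) + y (j : ℕ) ≠ 0 := hxy _ i.isLt _ j.isLt
        have h2 : x 0 + y (j : ℕ) ≠ 0 := h0 _ j.isLt
        simp only [hC2, Matrix.of_apply, if_neg hi, if_pos rfl]
        rw [show ((0 : Fin (m+1)) : ℕ) = 0 from rfl]
        field_simp
        simp only [↓reduceIte]
        ring
    have step2 : C2.det = (∏ j : Fin (m+1), 1 / (x 0 + y (j : ℕ))) * C3.det := by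
      rw [hC2, hC3]
      exact Matrix.det_mul_row _ _
    have step3 : C3.det = C4.det := by
      apply det_eq_of_forall_col_eq_smul_add_const'
        (fun j : Fin (m+1) => if j = 0 then 0 else 1) 0 (by simp)
      intro i j
      by_cases hi : i = 0 <;> by_cases hj : j = 0 <;>
        simp [hC3, hC4, hi, hj] <;> ring
    have step4 : C4.det = (C4.submatrix Fin.succ Fin.succ).det := by
      rw [Matrix.det_succ_row_zero]
      rw [Finset.sum_eq_single (0 : Fin (m+1))]
      · simp [hC4, Fin.zero_succAbove]
      · intro j _ hj
        simp [hC4, hj]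
      · simp
    have step5 : (C4.submatrix Fin.succ Fin.succ).det =
        ((∏ i : Fin m, ((x 0 - x ((i : ℕ)+1)) * (1 / (x ((i : ℕ)+1) + y 0)))) *
          ((∏ j : Fin m, (y 0 - y ((j : ℕ)+1))) *
            (Matrix.of fun i j : Fin m => 1 / (x ((i : ℕ)+1) + y ((j : ℕ)+1))).det)) := by
      have hsub : C4.submatrix Fin.succ Fin.succ =
          Matrix.of (fun i j : Fin m =>
            ((x 0 - x ((i : ℕ)+1)) * (1 / (x ((i : ℕ)+1) + y 0))) *
              ((y 0 - y ((j : ℕ)+1)) * (1 / (x ((i : ℕ)+1) + y ((j : ℕ)+1))))) := by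
        ext i j
        have h1 : x ((i : ℕ)+1) + y ((j : ℕ)+1) ≠ 0 :=
          hxy _ (Nat.succ_lt_succ i.isLt) _ (Nat.succ_lt_succ j.isLt)
        have h2 : x ((i : ℕ)+1) + y 0 ≠ 0 := hxy _ (Nat.succ_lt_succ i.isLt) 0 (Nat.succ_pos m)
        simp only [Matrix.submatrix_apply, hC4, Matrix.of_apply, Fin.succ_ne_zero, if_neg,
          Fin.val_succ]
        simp only [↓reduceIte]
        field_simp
        try ring
        try exact Or.inl trivial
      rw [hsub]
      erw [Matrix.det_mul_column]
      congr 1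
      exact Matrix.det_mul_row _ _
    rw [step1, step2, step3, step4, step5,
      ih (fun k => x (k+1)) (fun k => y (k+1))
        (fun i hi j hj => hxy _ (Nat.succ_lt_succ hi) _ (Nat.succ_lt_succ hj))]
    -- now pure product algebra
    have e1 : (∏ j : Fin (m+1), 1 / (x 0 + y (j : ℕ)))
        = (∏ j ∈ Finset.range (m+1), (x 0 + y j))⁻¹ := by
      rw [Fin.prod_univ_eq_prod_range (fun j => 1 / (x 0 + y j)) (m+1)]
      simp [one_div, Finset.prod_inv_distrib]
    have e2 : (∏ i : Fin m, ((x 0 - x ((i : ℕ)+1)) * (1 / (x ((i : ℕ)+1) + y 0))))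
        = (∏ i ∈ Finset.range m, (x 0 - x (i+1)))
          * (∏ i ∈ Finset.range m, (x (i+1) + y 0))⁻¹ := by
      rw [Fin.prod_univ_eq_prod_range (fun i => (x 0 - x (i+1)) * (1 / (x (i+1) + y 0))) m]
      simp [one_div, Finset.prod_mul_distrib, Finset.prod_inv_distrib]
    have e3 : (∏ j : Fin m, (y 0 - y ((j : ℕ)+1)))
        = ∏ j ∈ Finset.range m, (y 0 - y (j+1)) :=
      Fin.prod_univ_eq_prod_range (fun j => y 0 - y (j+1)) m
    have eN : (∏ i ∈ Finset.range (m+1), ∏ j ∈ Finset.range i, ((x i - x j) * (y i - y j)))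
        = (∏ i ∈ Finset.range m, ∏ j ∈ Finset.range i,
            ((x (i+1) - x (j+1)) * (y (i+1) - y (j+1))))
          * ((∏ i ∈ Finset.range m, (x 0 - x (i+1)))
              * (∏ i ∈ Finset.range m, (y 0 - y (i+1)))) := by
      rw [Finset.prod_range_succ']
      simp only [Finset.range_zero, Finset.prod_empty, mul_one]
      rw [← Finset.prod_mul_distrib, ← Finset.prod_mul_distrib]
      apply Finset.prod_congr rfl
      intro i _
      rw [Finset.prod_range_succ']
      ring
    have eD : (∏ i ∈ Finset.range (m+1), ∏ j ∈ Finset.range (m+1), (x i + y j))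
        = (∏ j ∈ Finset.range (m+1), (x 0 + y j))
          * ((∏ i ∈ Finset.range m, (x (i+1) + y 0))
            * (∏ i ∈ Finset.range m, ∏ j ∈ Finset.range m, (x (i+1) + y (j+1)))) := by
      rw [Finset.prod_range_succ']
      rw [← Finset.prod_mul_distrib]
      rw [mul_comm]
      congr 1
      apply Finset.prod_congr rfl
      intro i _
      rw [Finset.prod_range_succ']
      ring
    rw [e1, e2, e3, eN, eD]
    have hP1 : (∏ j ∈ Finset.range (m+1), (x 0 + y j)) ≠ 0 :=
      Finset.prod_ne_zero_iff.mpr fun j hj => h0 j (Finset.mem_range.mp hj)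
    have hP3 : (∏ i ∈ Finset.range m, (x (i+1) + y 0)) ≠ 0 :=
      Finset.prod_ne_zero_iff.mpr fun i hi =>
        hxy _ (Nat.succ_lt_succ (Finset.mem_range.mp hi)) 0 (Nat.succ_pos m)
    have hD' : (∏ i ∈ Finset.range m, ∏ j ∈ Finset.range m, (x (i+1) + y (j+1))) ≠ 0 :=
      Finset.prod_ne_zero_iff.mpr fun i hi => Finset.prod_ne_zero_iff.mpr fun j hj =>
        hxy _ (Nat.succ_lt_succ (Finset.mem_range.mp hi)) _
          (Nat.succ_lt_succ (Finset.mem_range.mp hj))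
    field_simp

lemma key1 (a : ℕ) : ∀ j : ℕ, ((Nat.factorial j : ℚ))^2 * ((Nat.choose a j : ℚ) * (Nat.choose (a+j) j : ℚ))
    = ∏ r ∈ Finset.range j, ((a:ℚ)*((a:ℚ)+1) - ((r:ℚ)+1)*(r:ℚ)) := by
  intro j
  induction j with
  | zero => simp
  | succ j ih =>
    rw [Finset.prod_range_succ, ← ih]
    have e1 : (Nat.choose a (j+1) : ℚ) * ((j:ℚ)+1) = (Nat.choose a j : ℚ) * ((a:ℚ) - (j:ℚ)) := by
      rcases le_or_gt j a with hja | hja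
      · have hc : ((Nat.choose a (j+1) * (j+1) : ℕ) : ℚ) = ((Nat.choose a j * (a - j) : ℕ) : ℚ) :=
          by exact_mod_cast congrArg (Nat.cast : ℕ → ℚ) (Nat.choose_succ_right_eq a j)
        push_cast [Nat.cast_sub hja] at hc
        push_cast
        linarith
      · rw [Nat.choose_eq_zero_of_lt hja, Nat.choose_eq_zero_of_lt (by omega)]
        simp
    have e2 : (Nat.choose (a+j+1) (j+1) : ℚ) * ((j:ℚ)+1)
        = (Nat.choose (a+j) j : ℚ) * ((a:ℚ)+(j:ℚ)+1) := by
      have hc : (((a+j+1) * Nat.choose (a+j) j : ℕ) : ℚ)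
          = ((Nat.choose (a+j+1) (j+1) * (j+1) : ℕ) : ℚ) :=
        by exact_mod_cast congrArg (Nat.cast : ℕ → ℚ) (Nat.add_one_mul_choose_eq (a+j) j)
      push_cast at hc
      push_cast
      linarith
    have hfac : ((Nat.factorial (j+1) : ℕ) : ℚ) = ((j:ℚ)+1) * (Nat.factorial j : ℚ) := by
      rw [Nat.factorial_succ]; push_cast; ring
    have hadd : a + (j+1) = (a+j)+1 := by omega
    rw [hadd, hfac]
    linear_combination ((Nat.factorial j : ℚ))^2 * ((Nat.choose (a+j+1) (j+1) : ℚ) * ((j:ℚ)+1)) * e1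
      + ((Nat.factorial j : ℚ))^2 * ((Nat.choose a j : ℚ) * ((a:ℚ) - (j:ℚ))) * e2

lemma aux_range_if (n j : ℕ) (hj : j ≤ n) (g : ℕ → ℚ) :
    ∏ i ∈ Finset.range n, (if i < j then g i else 1) = ∏ i ∈ Finset.range j, g i := by
  rw [← Finset.prod_subset (Finset.range_subset_range.mpr hj)
    (fun x hx hnx => if_neg (by simp only [Finset.mem_range] at hx hnx ⊢; omega))]
  exact Finset.prod_congr rfl fun x hx => if_pos (Finset.mem_range.mp hx)

lemma prod_Ioi_eq (n : ℕ) (f : ℕ → ℕ → ℚ) :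
    (∏ i : Fin n, ∏ j ∈ Finset.Ioi i, f (i : ℕ) (j : ℕ))
      = ∏ j ∈ Finset.range n, ∏ i ∈ Finset.range j, f i j := by
  have h1 : ∀ i : Fin n, ∏ j ∈ Finset.Ioi i, f (i : ℕ) (j : ℕ)
      = ∏ j : Fin n, (if i < j then f (i : ℕ) (j : ℕ) else 1) := by
    intro i
    rw [← Finset.filter_lt_eq_Ioi, Finset.prod_filter]
  simp only [h1]
  rw [Finset.prod_comm]
  have h2 : ∀ j : Fin n, ∏ i : Fin n, (if i < j then f (i : ℕ) (j : ℕ) else 1)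
      = ∏ i ∈ Finset.range (j : ℕ), f i (j : ℕ) := by
    intro j
    simp only [Fin.lt_def]
    rw [Fin.prod_univ_eq_prod_range (fun i => if i < (j : ℕ) then f i (j : ℕ) else 1) n]
    exact aux_range_if n j j.isLt.le (fun i => f i (j : ℕ))
  simp only [h2]
  exact Fin.prod_univ_eq_prod_range (fun j => ∏ i ∈ Finset.range j, f i j) n

lemma detA (n m : ℕ) :
    (Matrix.of fun i j : Fin n =>
        ((Nat.choose ((i : ℕ) + m) (j : ℕ) : ℚ) *
            (Nat.choose ((i : ℕ) + m + (j : ℕ)) (j : ℕ) : ℚ)) /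
          (Nat.choose (2 * (i : ℕ) + 2 * m) ((i : ℕ) + m) : ℚ)).det
      = (∏ i ∈ Finset.range n, ((Nat.factorial (i+m) : ℚ)^2 /
            ((Nat.factorial (2*i+2*m) : ℚ) * (Nat.factorial i : ℚ)^2)))
        * ∏ j ∈ Finset.range n, ∏ i ∈ Finset.range j,
            (((j:ℚ) - (i:ℚ)) * ((i:ℚ) + (j:ℚ) + 2*(m:ℚ) + 1)) := by
  set q : ℕ → ℚ[X] := fun j => ∏ r ∈ Finset.range j, (X - C (((r:ℚ)+1)*(r:ℚ))) with hq
  set t : Fin n → ℚ := fun i => (((i:ℕ)+m : ℕ) : ℚ) * ((((i:ℕ)+m : ℕ) : ℚ)+1) with ht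
  have heval : ∀ (i : Fin n) (j : ℕ), (q j).eval (t i)
      = ∏ r ∈ Finset.range j, (t i - ((r:ℚ)+1)*(r:ℚ)) := by
    intro i j
    simp [hq, Polynomial.eval_prod]
  have hchoose : ∀ a : ℕ, (Nat.choose (2*a) a : ℚ) * (Nat.factorial a : ℚ)^2
      = (Nat.factorial (2*a) : ℚ) := by
    intro a
    have h := Nat.choose_mul_factorial_mul_factorial (show a ≤ 2*a by omega)
    rw [show 2*a - a = a by omega] at h
    have := congrArg (Nat.cast : ℕ → ℚ) h
    push_cast at this
    rw [← this]; ring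
  have hentry : ∀ i j : Fin n,
      ((Nat.choose ((i : ℕ) + m) (j : ℕ) : ℚ) *
          (Nat.choose ((i : ℕ) + m + (j : ℕ)) (j : ℕ) : ℚ)) /
        (Nat.choose (2 * (i : ℕ) + 2 * m) ((i : ℕ) + m) : ℚ)
      = ((Nat.factorial ((i:ℕ)+m) : ℚ)^2 / (Nat.factorial (2*(i:ℕ)+2*m) : ℚ)) *
          ((1 / (Nat.factorial (j:ℕ) : ℚ)^2) * (q (j:ℕ)).eval (t i)) := by
    intro i j
    set a : ℕ := (i:ℕ) + m with ha
    have h2a : 2*(i:ℕ) + 2*m = 2*a := by omega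
    rw [h2a, heval]
    have hk := key1 a (j:ℕ)
    have h1 : ∏ r ∈ Finset.range (j:ℕ), (t i - ((r:ℚ)+1)*(r:ℚ))
        = ∏ r ∈ Finset.range (j:ℕ), ((a:ℚ)*((a:ℚ)+1) - ((r:ℚ)+1)*(r:ℚ)) := by
      apply Finset.prod_congr rfl; intro r _
      simp only [ht, ha]
    rw [h1, ← hk]
    have hfjX : True := trivial
    have hfj : (Nat.factorial (j:ℕ) : ℚ) ≠ 0 := Nat.cast_ne_zero.mpr (Nat.factorial_ne_zero _)
    have hf2a : (Nat.factorial (2*a) : ℚ) ≠ 0 := Nat.cast_ne_zero.mpr (Nat.factorial_ne_zero _)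
    have hcb : (Nat.choose (2*a) a : ℚ) ≠ 0 :=
      Nat.cast_ne_zero.mpr (Nat.choose_pos (show a ≤ 2*a by omega)).ne'
    have hc := hchoose a
    rw [show (1 / (Nat.factorial (j:ℕ) : ℚ)^2) * ((Nat.factorial (j:ℕ) : ℚ)^2 *
        ((Nat.choose a (j:ℕ) : ℚ) * (Nat.choose (a+(j:ℕ)) (j:ℕ) : ℚ)))
        = (Nat.choose a (j:ℕ) : ℚ) * (Nat.choose (a+(j:ℕ)) (j:ℕ) : ℚ) from by field_simp]
    rw [div_mul_eq_mul_div, div_eq_div_iff hcb hf2a]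
    linear_combination ((Nat.choose a (j:ℕ) : ℚ) * (Nat.choose (a+(j:ℕ)) (j:ℕ) : ℚ)) * hc.symm
  have hmat : (Matrix.of fun i j : Fin n =>
        ((Nat.choose ((i : ℕ) + m) (j : ℕ) : ℚ) *
            (Nat.choose ((i : ℕ) + m + (j : ℕ)) (j : ℕ) : ℚ)) /
          (Nat.choose (2 * (i : ℕ) + 2 * m) ((i : ℕ) + m) : ℚ))
      = Matrix.of (fun i j : Fin n =>
          ((Nat.factorial ((i:ℕ)+m) : ℚ)^2 / (Nat.factorial (2*(i:ℕ)+2*m) : ℚ)) *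
            (Matrix.of (fun i j : Fin n =>
              (1 / (Nat.factorial (j:ℕ) : ℚ)^2) *
                (Matrix.of (fun i j : Fin n => (q (j:ℕ)).eval (t i))) i j)) i j) := by
    ext i j
    simp only [Matrix.of_apply]
    exact hentry i j
  rw [hmat, Matrix.det_mul_column, Matrix.det_mul_row]
  have hvdm : (Matrix.of (fun i j : Fin n => (q (j:ℕ)).eval (t i))).det
      = (Matrix.vandermonde t).det := by
    rw [Matrix.det_eval_matrixOfPolynomials_eq_det_vandermonde t (fun j : Fin n => q (j:ℕ))
      (fun j => ?_) (fun j => ?_)]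
    · rw [hq]
      rw [Polynomial.natDegree_prod _ _ (fun r _ => Polynomial.X_sub_C_ne_zero _),
        ]
      simp only [Polynomial.natDegree_X_sub_C, Finset.sum_const, smul_eq_mul, mul_one,
        Finset.card_range]
    · exact Polynomial.monic_prod_of_monic _ _ (fun r _ => Polynomial.monic_X_sub_C _)
  rw [hvdm, Matrix.det_vandermonde]
  have hprod : (∏ i : Fin n, ∏ j ∈ Finset.Ioi i, (t j - t i))
      = ∏ j ∈ Finset.range n, ∏ i ∈ Finset.range j,
          (((j:ℚ) - (i:ℚ)) * ((i:ℚ) + (j:ℚ) + 2*(m:ℚ) + 1)) := by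
    rw [← prod_Ioi_eq n (fun i j => ((j:ℚ) - (i:ℚ)) * ((i:ℚ) + (j:ℚ) + 2*(m:ℚ) + 1))]
    apply Finset.prod_congr rfl; intro i _
    apply Finset.prod_congr rfl; intro j _
    simp only [ht]
    push_cast
    ring
  rw [hprod]
  rw [Fin.prod_univ_eq_prod_range
    (fun i => (Nat.factorial (i+m) : ℚ)^2 / (Nat.factorial (2*i+2*m) : ℚ)) n,
    Fin.prod_univ_eq_prod_range (fun j => 1 / (Nat.factorial j : ℚ)^2) n]
  rw [← mul_assoc, ← Finset.prod_mul_distrib]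
  congr 1
  apply Finset.prod_congr rfl
  intro i _
  ring

lemma Lf : ∀ k : ℕ, ∏ i ∈ Finset.range k, ((k:ℚ) - (i:ℚ)) = (Nat.factorial k : ℚ) := by
  intro k
  induction k with
  | zero => simp
  | succ k ih =>
    rw [Finset.prod_range_succ']
    have h : ∀ i ∈ Finset.range k, (((k+1:ℕ)):ℚ) - (((i+1:ℕ)):ℚ) = (k:ℚ) - (i:ℚ) := by
      intro i _; push_cast; ring
    rw [Finset.prod_congr rfl h, ih, Nat.factorial_succ]
    push_cast; ring

lemma Lg (x : ℕ) : ∀ k : ℕ,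
    (∏ i ∈ Finset.range k, ((x:ℚ) + 1 + (i:ℚ))) * (Nat.factorial x : ℚ)
      = (Nat.factorial (x+k) : ℚ) := by
  intro k
  induction k with
  | zero => simp
  | succ k ih =>
    rw [Finset.prod_range_succ, show x+(k+1) = (x+k)+1 from rfl, Nat.factorial_succ]
    push_cast
    linear_combination ((x:ℚ)+1+(k:ℚ)) * ih

lemma LD (m n : ℕ) :
    (∏ j ∈ Finset.range m, ∏ i ∈ Finset.range m, ((((n+1:ℕ)):ℚ) + (i:ℚ) + (j:ℚ) + 1))
        * (∏ j ∈ Finset.range m, ((n:ℚ) + (j:ℚ) + 1))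
    = (∏ j ∈ Finset.range m, ∏ i ∈ Finset.range m, ((n:ℚ) + (i:ℚ) + (j:ℚ) + 1))
        * (∏ j ∈ Finset.range m, ((n:ℚ) + (m:ℚ) + (j:ℚ) + 1)) := by
  rw [← Finset.prod_mul_distrib, ← Finset.prod_mul_distrib]
  apply Finset.prod_congr rfl
  intro j _
  have hL : (∏ i ∈ Finset.range m, ((((n+1:ℕ)):ℚ) + (i:ℚ) + (j:ℚ) + 1)) * ((n:ℚ) + (j:ℚ) + 1)
      = ∏ i ∈ Finset.range (m+1), ((n:ℚ) + (i:ℚ) + (j:ℚ) + 1) := by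
    rw [Finset.prod_range_succ']
    congr 1
    · apply Finset.prod_congr rfl
      intro i _; push_cast; ring
    · push_cast; ring
  have hR : (∏ i ∈ Finset.range m, ((n:ℚ) + (i:ℚ) + (j:ℚ) + 1)) * ((n:ℚ) + (m:ℚ) + (j:ℚ) + 1)
      = ∏ i ∈ Finset.range (m+1), ((n:ℚ) + (i:ℚ) + (j:ℚ) + 1) := by
    rw [Finset.prod_range_succ]
  rw [hL, hR]

lemma key3 (m : ℕ) : ∀ n : ℕ,
    ((∏ i ∈ Finset.range n, ((Nat.factorial (i+m) : ℚ)^2 /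
          ((Nat.factorial (2*i+2*m) : ℚ) * (Nat.factorial i : ℚ)^2)))
      * ∏ j ∈ Finset.range n, ∏ i ∈ Finset.range j,
          (((j:ℚ) - (i:ℚ)) * ((i:ℚ) + (j:ℚ) + 2*(m:ℚ) + 1)))
      * (∏ j ∈ Finset.range m, ∏ i ∈ Finset.range m, ((n:ℚ) + (i:ℚ) + (j:ℚ) + 1))
      = ∏ j ∈ Finset.range m, ∏ i ∈ Finset.range m, ((i:ℚ) + (j:ℚ) + 1) := by
  intro n
  induction n with
  | zero => simp
  | succ n ih =>
    rw [Finset.prod_range_succ, Finset.prod_range_succ]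
    -- the new double-product factor at j = n
    have hg : (∏ i ∈ Finset.range n, (((n:ℚ) - (i:ℚ)) * ((i:ℚ) + (n:ℚ) + 2*(m:ℚ) + 1)))
        = (Nat.factorial n : ℚ) * (∏ i ∈ Finset.range n, ((i:ℚ) + (n:ℚ) + 2*(m:ℚ) + 1)) := by
      rw [Finset.prod_mul_distrib, Lf]
    have hQ : (∏ i ∈ Finset.range n, ((i:ℚ) + (n:ℚ) + 2*(m:ℚ) + 1))
        * (Nat.factorial (n+2*m) : ℚ) = (Nat.factorial (2*n+2*m) : ℚ) := by
      have h1 : ∀ i ∈ Finset.range n, ((i:ℚ) + (n:ℚ) + 2*(m:ℚ) + 1)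
          = (((n+2*m:ℕ)):ℚ) + 1 + (i:ℚ) := by intro i _; push_cast; ring
      rw [Finset.prod_congr rfl h1, Lg (n+2*m) n, show n+2*m+n = 2*n+2*m by omega]
    have hR1 : (∏ j ∈ Finset.range m, ((n:ℚ) + (j:ℚ) + 1)) * (Nat.factorial n : ℚ)
        = (Nat.factorial (n+m) : ℚ) := by
      have h1 : ∀ j ∈ Finset.range m, ((n:ℚ) + (j:ℚ) + 1) = ((n:ℚ)) + 1 + (j:ℚ) := by
        intro j _; ring
      rw [Finset.prod_congr rfl h1, Lg n m]
    have hR2 : (∏ j ∈ Finset.range m, ((n:ℚ) + (m:ℚ) + (j:ℚ) + 1)) * (Nat.factorial (n+m) : ℚ)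
        = (Nat.factorial (n+2*m) : ℚ) := by
      have h1 : ∀ j ∈ Finset.range m, ((n:ℚ) + (m:ℚ) + (j:ℚ) + 1)
          = (((n+m:ℕ)):ℚ) + 1 + (j:ℚ) := by intro j _; push_cast; ring
      rw [Finset.prod_congr rfl h1, Lg (n+m) m, show n+m+m = n+2*m by omega]
    have hLD := LD m n
    -- nonzeroness
    have hfn : (Nat.factorial n : ℚ) ≠ 0 := Nat.cast_ne_zero.mpr (Nat.factorial_ne_zero _)
    have hfnm : (Nat.factorial (n+m) : ℚ) ≠ 0 := Nat.cast_ne_zero.mpr (Nat.factorial_ne_zero _)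
    have hfn2m : (Nat.factorial (n+2*m) : ℚ) ≠ 0 := Nat.cast_ne_zero.mpr (Nat.factorial_ne_zero _)
    have hf2n : (Nat.factorial (2*n+2*m) : ℚ) ≠ 0 := Nat.cast_ne_zero.mpr (Nat.factorial_ne_zero _)
    have hR1ne : (∏ j ∈ Finset.range m, ((n:ℚ) + (j:ℚ) + 1)) ≠ 0 :=
      Finset.prod_ne_zero_iff.mpr (fun j _ => by positivity)
    -- step equality
    have step : ((Nat.factorial (n+m) : ℚ)^2 /
          ((Nat.factorial (2*n+2*m) : ℚ) * (Nat.factorial n : ℚ)^2))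
        * ((∏ i ∈ Finset.range n, (((n:ℚ) - (i:ℚ)) * ((i:ℚ) + (n:ℚ) + 2*(m:ℚ) + 1)))
          * (∏ j ∈ Finset.range m, ∏ i ∈ Finset.range m, ((((n+1:ℕ)):ℚ) + (i:ℚ) + (j:ℚ) + 1)))
        = ∏ j ∈ Finset.range m, ∏ i ∈ Finset.range m, ((n:ℚ) + (i:ℚ) + (j:ℚ) + 1) := by
      rw [hg, div_mul_eq_mul_div, div_eq_iff (by positivity)]
      apply mul_right_cancel₀ hR1ne
      rw [← hQ, ← hR2, ← hR1]
      linear_combination ((∏ j ∈ Finset.range m, ((n:ℚ) + (j:ℚ) + 1))^2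
        * (Nat.factorial n : ℚ)^3 * (∏ i ∈ Finset.range n, ((i:ℚ) + (n:ℚ) + 2*(m:ℚ) + 1))) * hLD
    calc ((∏ i ∈ Finset.range n, ((Nat.factorial (i+m) : ℚ)^2 /
          ((Nat.factorial (2*i+2*m) : ℚ) * (Nat.factorial i : ℚ)^2)))
          * ((Nat.factorial (n+m) : ℚ)^2 /
            ((Nat.factorial (2*n+2*m) : ℚ) * (Nat.factorial n : ℚ)^2))
        * ((∏ j ∈ Finset.range n, ∏ i ∈ Finset.range j,
            (((j:ℚ) - (i:ℚ)) * ((i:ℚ) + (j:ℚ) + 2*(m:ℚ) + 1)))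
          * ∏ i ∈ Finset.range n, (((n:ℚ) - (i:ℚ)) * ((i:ℚ) + (n:ℚ) + 2*(m:ℚ) + 1))))
        * (∏ j ∈ Finset.range m, ∏ i ∈ Finset.range m, ((((n+1:ℕ)):ℚ) + (i:ℚ) + (j:ℚ) + 1))
        = ((∏ i ∈ Finset.range n, ((Nat.factorial (i+m) : ℚ)^2 /
              ((Nat.factorial (2*i+2*m) : ℚ) * (Nat.factorial i : ℚ)^2)))
          * ∏ j ∈ Finset.range n, ∏ i ∈ Finset.range j,
              (((j:ℚ) - (i:ℚ)) * ((i:ℚ) + (j:ℚ) + 2*(m:ℚ) + 1)))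
          * (((Nat.factorial (n+m) : ℚ)^2 /
              ((Nat.factorial (2*n+2*m) : ℚ) * (Nat.factorial n : ℚ)^2))
            * ((∏ i ∈ Finset.range n, (((n:ℚ) - (i:ℚ)) * ((i:ℚ) + (n:ℚ) + 2*(m:ℚ) + 1)))
              * (∏ j ∈ Finset.range m, ∏ i ∈ Finset.range m,
                  ((((n+1:ℕ)):ℚ) + (i:ℚ) + (j:ℚ) + 1)))) := by ring
      _ = ((∏ i ∈ Finset.range n, ((Nat.factorial (i+m) : ℚ)^2 /
              ((Nat.factorial (2*i+2*m) : ℚ) * (Nat.factorial i : ℚ)^2)))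
          * ∏ j ∈ Finset.range n, ∏ i ∈ Finset.range j,
              (((j:ℚ) - (i:ℚ)) * ((i:ℚ) + (j:ℚ) + 2*(m:ℚ) + 1)))
          * (∏ j ∈ Finset.range m, ∏ i ∈ Finset.range m, ((n:ℚ) + (i:ℚ) + (j:ℚ) + 1)) := by
            rw [step]
      _ = ∏ j ∈ Finset.range m, ∏ i ∈ Finset.range m, ((i:ℚ) + (j:ℚ) + 1) := ih

theorem stmt_14 (n m : ℕ) :
    Matrix.det (Matrix.of fun i j : Fin n =>
        ((Nat.choose ((i : ℕ) + m) (j : ℕ) : ℚ) *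
            (Nat.choose ((i : ℕ) + m + (j : ℕ)) (j : ℕ) : ℚ)) /
          (Nat.choose (2 * (i : ℕ) + 2 * m) ((i : ℕ) + m) : ℚ)) *
      Matrix.det (Matrix.of fun i j : Fin m =>
        (1 : ℚ) / (((i : ℕ) + (j : ℕ) + 1 : ℕ) : ℚ))
      = Matrix.det (Matrix.of fun i j : Fin m =>
          (1 : ℚ) / ((n + (i : ℕ) + (j : ℕ) + 1 : ℕ) : ℚ)) := by
  -- canonical quantities
  set V : ℚ := ∏ i ∈ Finset.range m, ∏ j ∈ Finset.range i, ((i:ℚ) - (j:ℚ))^2 with hV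
  set D0 : ℚ := ∏ j ∈ Finset.range m, ∏ i ∈ Finset.range m, ((i:ℚ) + (j:ℚ) + 1) with hD0
  set Dn : ℚ := ∏ j ∈ Finset.range m, ∏ i ∈ Finset.range m, ((n:ℚ) + (i:ℚ) + (j:ℚ) + 1) with hDn
  -- the Hilbert determinant
  have hH : Matrix.det (Matrix.of fun i j : Fin m =>
      (1 : ℚ) / (((i : ℕ) + (j : ℕ) + 1 : ℕ) : ℚ)) = V / D0 := by
    have e0 : (Matrix.of fun i j : Fin m => (1 : ℚ) / (((i : ℕ) + (j : ℕ) + 1 : ℕ) : ℚ))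
        = (Matrix.of fun i j : Fin m => 1 / ((((i:ℕ):ℚ)) + (((j:ℕ):ℚ) + 1))) := by
      ext i j
      simp only [Matrix.of_apply]
      congr 1
      push_cast
      ring
    rw [e0]
    have hc := cauchy_det m (fun k => (k:ℚ)) (fun k => (k:ℚ)+1)
      (fun i _ j _ => by positivity)
    rw [hc]
    congr 1
    · rw [hV]
      apply Finset.prod_congr rfl; intro i _
      apply Finset.prod_congr rfl; intro j _
      ring
    · rw [hD0, Finset.prod_comm]
      apply Finset.prod_congr rfl; intro j _
      apply Finset.prod_congr rfl; intro i _
      ring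
  -- the shifted Hilbert determinant
  have hHn : Matrix.det (Matrix.of fun i j : Fin m =>
      (1 : ℚ) / ((n + (i : ℕ) + (j : ℕ) + 1 : ℕ) : ℚ)) = V / Dn := by
    have e0 : (Matrix.of fun i j : Fin m => (1 : ℚ) / ((n + (i : ℕ) + (j : ℕ) + 1 : ℕ) : ℚ))
        = (Matrix.of fun i j : Fin m => 1 / (((n:ℚ) + ((i:ℕ):ℚ)) + (((j:ℕ):ℚ) + 1))) := by
      ext i j
      simp only [Matrix.of_apply]
      congr 1
      push_cast
      ring
    rw [e0]
    have hc := cauchy_det m (fun k => (n:ℚ) + (k:ℚ)) (fun k => (k:ℚ)+1)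
      (fun i _ j _ => by positivity)
    rw [hc]
    congr 1
    · rw [hV]
      apply Finset.prod_congr rfl; intro i _
      apply Finset.prod_congr rfl; intro j _
      ring
    · rw [hDn, Finset.prod_comm]
      apply Finset.prod_congr rfl; intro j _
      apply Finset.prod_congr rfl; intro i _
      ring
  rw [hH, hHn, detA n m]
  have hkey := key3 m n
  have hD0ne : D0 ≠ 0 := by
    rw [hD0]
    exact Finset.prod_ne_zero_iff.mpr fun j _ => Finset.prod_ne_zero_iff.mpr
      fun i _ => by positivity
  have hDnne : Dn ≠ 0 := by
    rw [hDn]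
    exact Finset.prod_ne_zero_iff.mpr fun j _ => Finset.prod_ne_zero_iff.mpr
      fun i _ => by positivity
  have hX : ((∏ i ∈ Finset.range n, ((Nat.factorial (i+m) : ℚ)^2 /
        ((Nat.factorial (2*i+2*m) : ℚ) * (Nat.factorial i : ℚ)^2)))
      * ∏ j ∈ Finset.range n, ∏ i ∈ Finset.range j,
          (((j:ℚ) - (i:ℚ)) * ((i:ℚ) + (j:ℚ) + 2*(m:ℚ) + 1))) = D0 / Dn := by
    rw [eq_div_iff hDnne]
    exact hkey
  rw [hX, div_mul_div_comm, div_eq_div_iff (mul_ne_zero hDnne hD0ne) hDnne]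
  ring
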